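/- Let ω₁,…,ω_{2μ} be the dual basis of an orthonormal basis of a 2μ-dimensional Euclidean space, and let λ₁,…,λ_μ be real numbers. Then the comass of the 2-form f = Σ_j λ_j · ω_{2j-1} ∧ ω_{2j} equals max_j |λ_j|. -/

import Mathlib

noncomputable section
open scoped BigOperators

def idx0 {μ : ℕ} (i : Fin μ) : Fin (2*μ) := ⟨2*i.1, by have := i.2; omega⟩
def idx1 {μ : ℕ} (i : Fin μ) : Fin (2*μ) := ⟨2*i.1+1, by have := i.2; omega⟩

def pairEquiv (μ : ℕ) : Fin μ × Bool ≃ Fin (2*μ) where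
  toFun x := if x.2 then idx1 x.1 else idx0 x.1
  invFun i := (⟨i.1/2, by have := i.2; omega⟩, decide (i.1 % 2 = 1))
  left_inv := by
    rintro ⟨j, b⟩
    cases b <;> simp [idx0, idx1, Fin.ext_iff] <;> omega
  right_inv := by
    rintro ⟨i, hi⟩
    by_cases h : i % 2 = 1
    · simp only [h, decide_true, if_true, idx1, Fin.ext_iff]; omega
    · simp only [h, decide_false, Bool.false_eq_true, if_false, idx0, Fin.ext_iff]; omega

lemma sum_pair {μ : ℕ} (g : Fin (2*μ) → ℝ) :
    ∑ i, g i = ∑ j : Fin μ, (g (idx0 j) + g (idx1 j)) := by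
  rw [← Equiv.sum_comp (pairEquiv μ) g, Fintype.sum_prod_type]
  simp [pairEquiv, add_comm]

lemma norm_sq_sum {V : Type*} [NormedAddCommGroup V] [InnerProductSpace ℝ V]
    {n : ℕ} (b : OrthonormalBasis (Fin n) ℝ V) (v : V) :
    ∑ i, (inner ℝ (b i) v : ℝ)^2 = ‖v‖^2 := by
  have h := b.sum_inner_mul_inner v v
  rw [real_inner_self_eq_norm_sq] at h
  rw [← h]
  refine Finset.sum_congr rfl fun i _ => ?_
  rw [real_inner_comm (b i) v, sq]

lemma det_le {p q r s : ℝ} : |p*s - r*q| ≤ Real.sqrt (p^2+q^2) * Real.sqrt (r^2+s^2) := by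
  rw [← Real.sqrt_mul (by positivity), ← Real.sqrt_sq_eq_abs]
  apply Real.sqrt_le_sqrt
  nlinarith [sq_nonneg (p*r + q*s)]

theorem stmt_5 {V : Type*} [NormedAddCommGroup V] [InnerProductSpace ℝ V]
    (μ : ℕ) (hμ : 0 < μ) (b : OrthonormalBasis (Fin (2*μ)) ℝ V)
    (lam : Fin μ → ℝ) :
    IsGreatest {x : ℝ | ∃ v w : V, ‖v‖ = 1 ∧ ‖w‖ = 1 ∧ (inner ℝ v w : ℝ) = 0 ∧
        x = ∑ j : Fin μ, lam j *
          ((inner ℝ (b (idx0 j)) v : ℝ) * (inner ℝ (b (idx1 j)) w : ℝ)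
            - (inner ℝ (b (idx0 j)) w : ℝ) * (inner ℝ (b (idx1 j)) v : ℝ))}
      (Finset.univ.sup'
        (Finset.univ_nonempty_iff.mpr (Fin.pos_iff_nonempty.mp hμ))
        fun j => |lam j|) := by
  have hbij : ∀ i j : Fin (2*μ), (inner ℝ (b i) (b j) : ℝ) = if i = j then 1 else 0 :=
    orthonormal_iff_ite.mp b.orthonormal
  have h00 : ∀ i j : Fin μ, (inner ℝ (b (idx0 i)) (b (idx0 j)) : ℝ) = if i = j then 1 else 0 := by
    intro i j
    rw [hbij]
    by_cases h : i = j <;> simp [h, idx0, Fin.ext_iff] <;> omega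
  have h11 : ∀ i j : Fin μ, (inner ℝ (b (idx1 i)) (b (idx1 j)) : ℝ) = if i = j then 1 else 0 := by
    intro i j
    rw [hbij]
    by_cases h : i = j <;> simp [h, idx1, Fin.ext_iff] <;> omega
  have h01 : ∀ i j : Fin μ, (inner ℝ (b (idx0 i)) (b (idx1 j)) : ℝ) = 0 := by
    intro i j
    rw [hbij, if_neg]
    simp only [idx0, idx1, Fin.ext_iff, Fin.mk.injEq]
    omega
  have h10 : ∀ i j : Fin μ, (inner ℝ (b (idx1 i)) (b (idx0 j)) : ℝ) = 0 := by
    intro i j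
    rw [hbij, if_neg]
    simp only [idx0, idx1, Fin.ext_iff, Fin.mk.injEq]
    omega
  constructor
  · -- membership
    obtain ⟨j₀, -, hj₀⟩ := Finset.exists_mem_eq_sup'
      (Finset.univ_nonempty_iff.mpr (Fin.pos_iff_nonempty.mp hμ)) fun j => |lam j|
    set s : ℝ := if lam j₀ < 0 then -1 else 1 with hs
    refine ⟨b (idx0 j₀), s • b (idx1 j₀), b.orthonormal.1 _, ?_, ?_, ?_⟩
    · rw [norm_smul, b.orthonormal.1, Real.norm_eq_abs, hs]
      split_ifs <;> simp
    · rw [real_inner_smul_right, h01]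
      ring
    · simp only [real_inner_smul_right, h00, h01, h10, h11]
      rw [Finset.sum_eq_single j₀]
      · simp only [if_pos rfl]
        rw [hj₀]
        rcases lt_or_ge (lam j₀) 0 with h | h
        · rw [abs_of_neg h, hs, if_pos h]; simp
        · rw [abs_of_nonneg h, hs, if_neg (not_lt.mpr h)]; simp
      · intro j _ hj
        simp [if_neg hj]
      · intro h
        exact absurd (Finset.mem_univ j₀) h
  · -- upper bound
    rintro x ⟨v, w, hv, hw, -, rfl⟩
    set M := Finset.univ.sup'
        (Finset.univ_nonempty_iff.mpr (Fin.pos_iff_nonempty.mp hμ))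
        (fun j => |lam j|) with hMdef
    have hM : ∀ j, |lam j| ≤ M := fun j => Finset.le_sup' (fun j => |lam j|) (Finset.mem_univ j)
    have hM0 : 0 ≤ M := le_trans (abs_nonneg _) (hM ⟨0, hμ⟩)
    set p : Fin μ → ℝ := fun j => (inner ℝ (b (idx0 j)) v : ℝ) with hp
    set q : Fin μ → ℝ := fun j => (inner ℝ (b (idx1 j)) v : ℝ) with hq
    set r : Fin μ → ℝ := fun j => (inner ℝ (b (idx0 j)) w : ℝ) with hr
    set t : Fin μ → ℝ := fun j => (inner ℝ (b (idx1 j)) w : ℝ) with ht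
    have hD : ∑ j : Fin μ, |p j * t j - r j * q j| ≤ 1 := by
      calc ∑ j : Fin μ, |p j * t j - r j * q j|
          ≤ ∑ j : Fin μ, Real.sqrt (p j^2 + q j^2) * Real.sqrt (r j^2 + t j^2) :=
            Finset.sum_le_sum fun j _ => det_le
        _ ≤ Real.sqrt (∑ j : Fin μ, (p j^2 + q j^2)) * Real.sqrt (∑ j : Fin μ, (r j^2 + t j^2)) :=
            Real.sum_sqrt_mul_sqrt_le _ (fun j => by positivity) (fun j => by positivity)
        _ = 1 := by
            rw [← sum_pair (fun i => (inner ℝ (b i) v : ℝ)^2),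
              ← sum_pair (fun i => (inner ℝ (b i) w : ℝ)^2), norm_sq_sum, norm_sq_sum, hv, hw]
            simp
    calc ∑ j : Fin μ, lam j * (p j * t j - r j * q j)
        ≤ ∑ j : Fin μ, |lam j * (p j * t j - r j * q j)| :=
          Finset.sum_le_sum fun j _ => le_abs_self _
      _ = ∑ j : Fin μ, |lam j| * |p j * t j - r j * q j| := by simp [abs_mul]
      _ ≤ ∑ j : Fin μ, M * |p j * t j - r j * q j| :=
          Finset.sum_le_sum fun j _ => mul_le_mul_of_nonneg_right (hM j) (abs_nonneg _)
      _ = M * ∑ j : Fin μ, |p j * t j - r j * q j| := by rw [Finset.mul_sum]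
      _ ≤ M * 1 := mul_le_mul_of_nonneg_left hD hM0
      _ = M := mul_one M
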